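/- If H is a normal subgroup of a ♭-regular, ♭-separated paratopological group G such that the group reflexion H♭ of H is compact, then H is compact in G♭ and the quotient paratopological group G/H is ♭-regular. -/

import Mathlib

open Topology Pointwise

/-- The group reflexion topology `τ♭`: the strongest group topology on `G` weaker than `τ`. -/
def flatTop (G : Type*) [Group G] (τ : TopologicalSpace G) : TopologicalSpace G :=
  sInf {t : TopologicalSpace G | τ ≤ t ∧ @IsTopologicalGroup G t _}

section aux

variable {G : Type*} [Group G]

lemma le_flatTop (τ : TopologicalSpace G) : τ ≤ flatTop G τ :=
  le_sInf fun _ ht => ht.1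

lemma flatTop_group (τ : TopologicalSpace G) : @IsTopologicalGroup G (flatTop G τ) _ :=
  topologicalGroup_sInf fun _ ht => ht.2

lemma flatTop_le {τ t : TopologicalSpace G} (h1 : τ ≤ t) (h2 : @IsTopologicalGroup G t _) :
    flatTop G τ ≤ t :=
  sInf_le ⟨h1, h2⟩

lemma subgroup_topGroup (H : Subgroup G) (t : TopologicalSpace G)
    (ht : @IsTopologicalGroup G t _) :
    @IsTopologicalGroup H (TopologicalSpace.induced (Subtype.val : H → G) t) _ := by
  letI := t
  haveI := ht
  exact (inferInstance : IsTopologicalGroup H)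

lemma quotient_topGroup (H : Subgroup G) [H.Normal] (t : TopologicalSpace G)
    (ht : @IsTopologicalGroup G t _) :
    @IsTopologicalGroup (G ⧸ H) (TopologicalSpace.coinduced (QuotientGroup.mk : G → G ⧸ H) t) _ := by
  letI := t
  haveI := ht
  exact (inferInstance : IsTopologicalGroup (G ⧸ H))

end aux

/-- If `H` is a normal subgroup of a ♭-regular, ♭-separated paratopological group `G` such
that the group reflexion `H♭` of `H` is compact, then `H` is compact in `G♭` and the quotient
paratopological group `G/H` is ♭-regular. -/
theorem stmt_13 {G : Type*} [Group G] [τ : TopologicalSpace G] [ContinuousMul G]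
    (H : Subgroup G) [H.Normal]
    (hsep : @T2Space G (flatTop G τ))
    (hreg : ∀ U ∈ nhds (1 : G), ∃ V ∈ nhds (1 : G), V ⊆ U ∧ IsClosed[flatTop G τ] V)
    (hcpt : @CompactSpace H
      (flatTop H (TopologicalSpace.induced (Subtype.val : H → G) τ))) :
    @IsCompact G (flatTop G τ) (H : Set G) ∧
      ∀ U ∈ nhds (1 : G ⧸ H), ∃ V ∈ nhds (1 : G ⧸ H), V ⊆ U ∧
        IsClosed[flatTop (G ⧸ H) (inferInstance : TopologicalSpace (G ⧸ H))] V := by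
  have hτσ : τ ≤ flatTop G τ := le_flatTop τ
  have hσg : @IsTopologicalGroup G (flatTop G τ) _ := flatTop_group τ
  -- Part 1: H is compact in G♭
  have hle : flatTop H (TopologicalSpace.induced (Subtype.val : H → G) τ)
      ≤ TopologicalSpace.induced (Subtype.val : H → G) (flatTop G τ) :=
    flatTop_le (induced_mono hτσ) (subgroup_topGroup H _ hσg)
  have hcont : Continuous[flatTop H (TopologicalSpace.induced (Subtype.val : H → G) τ),
      flatTop G τ] (Subtype.val : H → G) :=
    continuous_iff_le_induced.mpr hle
  have hcomp : @IsCompact G (flatTop G τ) (H : Set G) := by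
    have := @isCompact_range H G (flatTop H (TopologicalSpace.induced (Subtype.val : H → G) τ)) (flatTop G τ) hcpt _ hcont
    simpa using this
  refine ⟨hcomp, ?_⟩
  -- Part 2: G/H is ♭-regular
  intro U hU
  have h1 : ((1 : G) : G ⧸ H) = (1 : G ⧸ H) := rfl
  have hpre : ((QuotientGroup.mk : G → G ⧸ H) ⁻¹' U) ∈ nhds (1 : G) := by
    refine (QuotientGroup.continuous_mk (N := H)).continuousAt.preimage_mem_nhds ?_
    rwa [h1]
  obtain ⟨V, hV, hVU, hVcl⟩ := hreg _ hpre
  refine ⟨(QuotientGroup.mk : G → G ⧸ H) '' V, ?_, ?_, ?_⟩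
  · have := (QuotientGroup.isOpenMap_coe (N := H)).image_mem_nhds hV
    rwa [h1] at this
  · rintro _ ⟨v, hv, rfl⟩
    exact hVU hv
  · -- `mk '' V` is closed in the flat topology of `G ⧸ H`
    have hmul : IsClosed[flatTop G τ] (V * (H : Set G)) := by
      letI := flatTop G τ
      haveI := hσg
      exact hVcl.mul_right_of_isCompact hcomp
    have hpreq : ((QuotientGroup.mk : G → G ⧸ H) ⁻¹' (QuotientGroup.mk '' V)) =
        V * (H : Set G) := by
      ext x
      simp only [Set.mem_preimage, Set.mem_image, Set.mem_mul]
      constructor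
      · rintro ⟨v, hv, hvx⟩
        exact ⟨v, hv, v⁻¹ * x, QuotientGroup.eq.mp hvx, by group⟩
      · rintro ⟨v, hv, h, hh, rfl⟩
        exact ⟨v, hv, QuotientGroup.eq.mpr (by simpa using hh)⟩
    have hco : IsClosed[TopologicalSpace.coinduced (QuotientGroup.mk : G → G ⧸ H)
        (flatTop G τ)] ((QuotientGroup.mk : G → G ⧸ H) '' V) := by
      rw [@isClosed_coinduced, hpreq]
      exact hmul
    have hflatle : flatTop (G ⧸ H) (inferInstance : TopologicalSpace (G ⧸ H))
        ≤ TopologicalSpace.coinduced (QuotientGroup.mk : G → G ⧸ H) (flatTop G τ) := by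
      refine flatTop_le ?_ (quotient_topGroup H _ hσg)
      exact coinduced_mono hτσ
    exact hco.mono hflatle
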